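/- Let β : ℝ → ℝ be continuous and nondecreasing with β(0) = 0, let ε > 0, let M > 0, and suppose β is Lipschitz continuous with constant K on the interval [-M, M]. Then |β̃_ε(r)| ≤ (ε + K)·|r| for all r ∈ ℝ with |r| ≤ M. -/

import Mathlib

/-- The inverse `g_ε` of the strictly increasing bijection `h_ε(r) = r + ε β(r)`. -/
noncomputable def gEps (β : ℝ → ℝ) (ε : ℝ) : ℝ → ℝ :=
  Function.invFun (fun r => r + ε * β r)

/-- The approximation `β̃_ε(r) = β(g_ε(r)) + ε r`. -/
noncomputable def betaTilde (β : ℝ → ℝ) (ε : ℝ) (r : ℝ) : ℝ :=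
  β (gEps β ε r) + ε * r

theorem stmt_16 (β : ℝ → ℝ) (hβc : Continuous β) (hβm : Monotone β) (hβ0 : β 0 = 0)
    (ε : ℝ) (hε : 0 < ε) (M : ℝ) (hM : 0 < M) (K : ℝ) (hK : 0 ≤ K)
    (hLip : ∀ r t : ℝ, r ∈ Set.Icc (-M) M → t ∈ Set.Icc (-M) M →
      |β r - β t| ≤ K * |r - t|) :
    ∀ r : ℝ, |r| ≤ M → |betaTilde β ε r| ≤ (ε + K) * |r| := by
  intro r hr
  -- surjectivity of h
  have hexist : ∃ s : ℝ, s + ε * β s = r := by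
    have h1 : β (-|r|) ≤ 0 := by
      have := hβm (show (-|r|) ≤ 0 by simp [abs_nonneg])
      simpa [hβ0] using this
    have h2 : (0:ℝ) ≤ β |r| := by
      have := hβm (abs_nonneg r)
      simpa [hβ0] using this
    have hle : (-|r|) + ε * β (-|r|) ≤ r := by
      have : ε * β (-|r|) ≤ 0 := mul_nonpos_of_nonneg_of_nonpos hε.le h1
      nlinarith [neg_abs_le r]
    have hge : r ≤ |r| + ε * β |r| := by
      have : (0:ℝ) ≤ ε * β |r| := mul_nonneg hε.le h2
      nlinarith [le_abs_self r]
    have hcont : ContinuousOn (fun s => s + ε * β s) (Set.Icc (-|r|) |r|) :=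
      (continuous_id.add (continuous_const.mul hβc)).continuousOn
    have := intermediate_value_Icc (neg_abs_le r |>.trans (le_abs_self r)) hcont
    obtain ⟨s, _, hs⟩ := this ⟨hle, hge⟩
    exact ⟨s, hs⟩
  have hinv : gEps β ε r + ε * β (gEps β ε r) = r := Function.invFun_eq hexist
  set s := gEps β ε r with hsdef
  -- |s| ≤ |r|
  have hsabs : |s| ≤ |r| := by
    rcases le_or_gt 0 s with h | h
    · have hb : (0:ℝ) ≤ β s := by
        have := hβm h; simpa [hβ0] using this
      have : s ≤ r := by nlinarith
      rw [abs_of_nonneg h, abs_of_nonneg (h.trans this)]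
      exact this
    · have hb : β s ≤ 0 := by
        have := hβm h.le; simpa [hβ0] using this
      have : r ≤ s := by nlinarith
      rw [abs_of_neg h, abs_of_neg (this.trans_lt h)]
      linarith
  have hsM : s ∈ Set.Icc (-M) M := by
    constructor <;> [nlinarith [neg_abs_le s, le_abs_self s]; nlinarith [le_abs_self s]]
  have h0M : (0:ℝ) ∈ Set.Icc (-M) M := ⟨by linarith, hM.le⟩
  have hβs : |β s| ≤ K * |r| := by
    have := hLip s 0 hsM h0M
    simp only [hβ0, sub_zero] at this
    calc |β s| ≤ K * |s| := this
      _ ≤ K * |r| := mul_le_mul_of_nonneg_left hsabs hK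
  calc |betaTilde β ε r| = |β s + ε * r| := by rw [betaTilde]
    _ ≤ |β s| + |ε * r| := abs_add_le _ _
    _ ≤ K * |r| + ε * |r| := by
        rw [abs_mul, abs_of_pos hε]; exact add_le_add_left hβs _
    _ = (ε + K) * |r| := by ring
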